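/- arXiv:1201.6620 — 3 statements merged into one kernel-verified Lean document; each statement's English description precedes it below -/
import Mathlib

section
/- Let n ≥ 3 be an integer, m = n − 1, and ρ = 1/m, so that the system (S_ρ) reads x′ = x·y and y′ = −(m−1)(1 − x²) − (m−3)·x·y. Let (x, y) be a solution on ℝ such that for all t ∈ ℝ: 0 < x(t) < 1, x′(t) < 0, and (x(t), y(t)) → (1, 0) as t → −∞. Then, as t → +∞: x(t)·y(t) → 0, y(t)/t → −(n−2), and (log x(t))/t² → −(n−2)/2. -/
open Filter Real Set

/-- Core MVT-type tool: nonpositive derivative on `[a, ∞)` forces `F t ≤ F a`. -/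
lemma aux_le_start {F : ℝ → ℝ} (hF : Differentiable ℝ F) {a t : ℝ}
    (h : ∀ s, a ≤ s → deriv F s ≤ 0) (hat : a ≤ t) : F t ≤ F a := by
  have hA : AntitoneOn F (Set.Ici a) := by
    refine antitoneOn_of_deriv_nonpos (convex_Ici a) hF.continuous.continuousOn
      hF.differentiableOn ?_
    intro s hs
    rw [interior_Ici] at hs
    exact h s hs.le
  exact hA (Set.self_mem_Ici) hat hat

lemma aux_deriv_lin {g : ℝ → ℝ} (hg : Differentiable ℝ g) (a t : ℝ) :
    deriv (fun s => g s + a * s) t = deriv g t + a := by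
  have h1 : DifferentiableAt ℝ (fun s : ℝ => a * s) t := by fun_prop
  rw [deriv_fun_add (hg t) h1, (by simpa using ((hasDerivAt_id t).const_mul a).deriv : deriv (fun s : ℝ => a * s) t = a)]

lemma aux_deriv_quad {g : ℝ → ℝ} (hg : Differentiable ℝ g) (a t : ℝ) :
    deriv (fun s => g s + a * s ^ 2) t = deriv g t + 2 * a * t := by
  have h1 : DifferentiableAt ℝ (fun s : ℝ => a * s ^ 2) t := by fun_prop
  rw [deriv_fun_add (hg t) h1]
  have : deriv (fun s : ℝ => a * s ^ 2) t = a * (2 * t) := by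
    rw [deriv_const_mul _ (by fun_prop : DifferentiableAt ℝ (fun s : ℝ => s ^ 2) t)]
    simp [deriv_pow]
  rw [this]; ring

/-- Upper linear bound from derivative bound. -/
lemma aux_upper {g : ℝ → ℝ} (hg : Differentiable ℝ g) {a c : ℝ}
    (h : ∀ s, a ≤ s → deriv g s ≤ c) : ∀ t, a ≤ t → g t ≤ g a + c * (t - a) := by
  intro t ht
  have key := aux_le_start (F := fun s => g s + (-c) * s)
    (hg.add ((differentiable_id.const_mul (-c)))) (a := a) ?_ ht
  · linarith
  · intro s hs
    rw [aux_deriv_lin hg]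
    have := h s hs; linarith

/-- Lower linear bound from derivative bound. -/
lemma aux_lower {g : ℝ → ℝ} (hg : Differentiable ℝ g) {a c : ℝ}
    (h : ∀ s, a ≤ s → c ≤ deriv g s) : ∀ t, a ≤ t → g a + c * (t - a) ≤ g t := by
  intro t ht
  have key := aux_upper (g := fun s => -g s) hg.neg (a := a) (c := -c) ?_ t ht
  · linarith
  · intro s hs
    rw [deriv.fun_neg]
    have := h s hs; linarith

/-- Slope lemma: if `deriv g → c` then `g t / t → c`. -/
lemma aux_slope {g : ℝ → ℝ} (hg : Differentiable ℝ g) {c : ℝ}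
    (h : Tendsto (deriv g) atTop (nhds c)) :
    Tendsto (fun t => g t / t) atTop (nhds c) := by
  rw [Metric.tendsto_nhds]
  intro ε hε
  have hev : ∀ᶠ s in atTop, dist (deriv g s) c < ε / 2 :=
    Metric.tendsto_nhds.mp h (ε / 2) (by linarith)
  obtain ⟨T, hT⟩ := eventually_atTop.mp hev
  set G : ℝ → ℝ := fun s => g s - c * s with hG
  have hdG : Differentiable ℝ G := hg.sub (differentiable_id.const_mul c)
  have hder : ∀ s, deriv G s = deriv g s - c := by
    intro s
    have : deriv (fun s => g s + (-c) * s) s = deriv g s + (-c) := aux_deriv_lin hg _ _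
    have he : G = fun s => g s + (-c) * s := by funext u; simp [hG]; ring
    rw [he, this]; ring
  clear_value G
  have hub : ∀ s, T ≤ s → deriv G s ≤ ε / 2 := by
    intro s hs
    have := hT s hs
    rw [Real.dist_eq] at this
    have := abs_lt.mp this
    rw [hder]; linarith [this.2]
  have hlb : ∀ s, T ≤ s → -(ε / 2) ≤ deriv G s := by
    intro s hs
    have := hT s hs
    rw [Real.dist_eq] at this
    have := abs_lt.mp this
    rw [hder]; linarith [this.1]
  have hbound : ∀ t, T ≤ t → |G t| ≤ |G T| + (ε / 2) * (t - T) := by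
    intro t ht
    have h1 := aux_upper hdG hub t ht
    have h2 := aux_lower hdG hlb t ht
    rw [abs_le]
    constructor
    · have : -|G T| ≤ G T := neg_abs_le _
      linarith
    · have : G T ≤ |G T| := le_abs_self _
      linarith
  filter_upwards [eventually_ge_atTop (max T (max 1 ((|G T| + (ε/2) * |T|) / (ε/2) + 1)))]
    with t ht
  have ht1 : T ≤ t := le_trans (le_max_left _ _) ht
  have ht2 : (1:ℝ) ≤ t := le_trans (le_trans (le_max_left _ _) (le_max_right _ _)) ht
  have ht3 : (|G T| + (ε/2) * |T|) / (ε/2) + 1 ≤ t :=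
    le_trans (le_trans (le_max_right _ _) (le_max_right _ _)) ht
  have htpos : (0:ℝ) < t := by linarith
  rw [Real.dist_eq]
  have hgt : g t / t - c = G t / t := by
    rw [hG]
    field_simp
  rw [hgt, abs_div, abs_of_pos htpos]
  rw [div_lt_iff₀ htpos]
  have hb := hbound t ht1
  have h5 : |G T| + (ε/2) * (t - T) ≤ |G T| + (ε/2) * |T| + (ε/2) * t := by
    nlinarith [le_abs_self T, neg_abs_le T, hε.le]
  have h6 : |G T| + (ε/2) * |T| ≤ (ε/2) * (t - 1) := by
    rw [div_add' _ _ _ (by linarith : (ε/2) ≠ 0)] at ht3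
    rw [div_le_iff₀ (by linarith : (0:ℝ) < ε/2)] at ht3
    nlinarith
  nlinarith

/-- Quadratic slope lemma: if `deriv g t / t → c` then `g t / t² → c / 2`. -/
lemma aux_slope_sq {g : ℝ → ℝ} (hg : Differentiable ℝ g) {c : ℝ}
    (h : Tendsto (fun t => deriv g t / t) atTop (nhds c)) :
    Tendsto (fun t => g t / t ^ 2) atTop (nhds (c / 2)) := by
  rw [Metric.tendsto_nhds]
  intro ε hε
  have hev : ∀ᶠ s in atTop, dist (deriv g s / s) c < ε / 2 :=
    Metric.tendsto_nhds.mp h (ε / 2) (by linarith)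
  obtain ⟨T₀, hT₀⟩ := eventually_atTop.mp hev
  set T := max T₀ 1 with hTdef
  have hT : ∀ s, T ≤ s → |deriv g s - c * s| ≤ (ε / 2) * s := by
    intro s hs
    have hs1 : (1:ℝ) ≤ s := le_trans (le_max_right _ _) hs
    have hspos : (0:ℝ) < s := by linarith
    have := hT₀ s (le_trans (le_max_left _ _) hs)
    rw [Real.dist_eq] at this
    have h2 : |deriv g s / s - c| * s ≤ (ε/2) * s := by
      nlinarith [abs_nonneg (deriv g s / s - c)]
    have h3 : deriv g s - c * s = (deriv g s / s - c) * s := by field_simp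
    rw [h3, abs_mul, abs_of_pos hspos]
    exact h2
  set G : ℝ → ℝ := fun s => g s - c / 2 * s ^ 2 with hG
  have hGe : G = fun s => g s + (-(c/2)) * s ^ 2 := by funext u; simp [hG]; ring
  have hdG : Differentiable ℝ G := by
    rw [hGe]; exact hg.add (by fun_prop)
  have hder : ∀ s, deriv G s = deriv g s - c * s := by
    intro s
    rw [hGe, aux_deriv_quad hg]; ring
  clear_value G
  -- upper: deriv (G - (ε/2)/2 * s^2)  ≤ 0 for s ≥ T ... use quadratic helper
  have hbound : ∀ t, T ≤ t → |G t| ≤ |G T| + (ε / 2) * t ^ 2 := by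
    intro t ht
    have hub := aux_le_start (F := fun s => G s + (-(ε/4)) * s ^ 2)
      (hdG.add (by fun_prop)) (a := T) ?_ ht
    rotate_left
    · intro s hs
      rw [aux_deriv_quad hdG]
      have h1 := hT s hs
      have hs0 : (0:ℝ) ≤ s := le_trans (by positivity) (le_trans (le_max_right _ _) hs)
      have := abs_le.mp h1
      rw [hder]
      nlinarith [this.2]
    have hlbF := aux_le_start (F := fun s => -(G s) + (-(ε/4)) * s ^ 2)
      (hdG.neg.add (by fun_prop)) (a := T) ?_ ht
    rotate_left
    · intro s hs
      rw [aux_deriv_quad (g := fun s => -G s) hdG.neg, deriv.fun_neg]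
      have h1 := hT s hs
      have hs0 : (0:ℝ) ≤ s := le_trans (by positivity) (le_trans (le_max_right _ _) hs)
      have := abs_le.mp h1
      rw [hder]
      nlinarith [this.1]
    have hT0 : (0:ℝ) ≤ T := le_trans zero_le_one (le_max_right _ _)
    have htT : T ^ 2 ≤ t ^ 2 := by nlinarith
    rw [abs_le]
    constructor
    · have : -|G T| ≤ G T := neg_abs_le _
      nlinarith [hε.le]
    · have : G T ≤ |G T| := le_abs_self _
      nlinarith [hε.le]
  filter_upwards [eventually_ge_atTop (max T (max 1 (Real.sqrt (|G T| / (ε/4)) + 1)))]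
    with t ht
  have ht1 : T ≤ t := le_trans (le_max_left _ _) ht
  have ht2 : (1:ℝ) ≤ t := le_trans (le_trans (le_max_left _ _) (le_max_right _ _)) ht
  have htpos : (0:ℝ) < t := by linarith
  have ht3 : Real.sqrt (|G T| / (ε/4)) ≤ t - 1 := by
    have := le_trans (le_trans (le_max_right _ _) (le_max_right _ _)) ht
    linarith
  have hGT : |G T| ≤ (ε/4) * t ^ 2 := by
    have h0 : |G T| / (ε/4) ≤ (t - 1) ^ 2 := by
      have := Real.sqrt_le_sqrt (le_of_eq (rfl : |G T| / (ε/4) = |G T| / (ε/4)))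
      have h1 : Real.sqrt (|G T| / (ε/4)) ^ 2 ≤ (t-1) ^ 2 := by
        have h2 : (0:ℝ) ≤ Real.sqrt (|G T| / (ε/4)) := Real.sqrt_nonneg _
        nlinarith
      rwa [Real.sq_sqrt (by positivity)] at h1
    rw [div_le_iff₀ (by linarith : (0:ℝ) < ε/4)] at h0
    nlinarith
  rw [Real.dist_eq]
  have hgt : g t / t ^ 2 - c / 2 = G t / t ^ 2 := by
    rw [hG]
    field_simp
  rw [hgt, abs_div, abs_of_pos (by positivity : (0:ℝ) < t ^ 2)]
  rw [div_lt_iff₀ (by positivity : (0:ℝ) < t ^ 2)]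
  have hb := hbound t ht1
  nlinarith [sq_nonneg t, mul_pos (mul_pos hε htpos) htpos]

/-- Proposition 4.4 for `ρ = 1/m` (the cigar-type soliton): for the system
`x′ = x·y`, `y′ = −(m−1)(1−x²) − (m−3)·x·y`, along a trajectory with `0 < x < 1`,
`x′ < 0`, emanating from `(1,0)` at `t = −∞`, one has, as `t → +∞`:
`x·y → 0`, `y/t → −(n−2)`, and `log x / t² → −(n−2)/2`. -/
theorem cigar_trajectory_asymptotics (n : ℕ) (hn : 3 ≤ n) (m ρ : ℝ)
    (hm : m = (n : ℝ) - 1) (hρ : ρ = 1 / m) (x y : ℝ → ℝ)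
    (hdx : Differentiable ℝ x) (hdy : Differentiable ℝ y)
    (heq1 : ∀ t : ℝ, deriv x t = x t * y t)
    (heq2 : ∀ t : ℝ, deriv y t = -((m - 1) * (1 - x t ^ 2)) - (m - 3) * (x t * y t))
    (hx : ∀ t : ℝ, 0 < x t ∧ x t < 1) (hx' : ∀ t : ℝ, deriv x t < 0)
    (hlim : Filter.Tendsto (fun t => (x t, y t)) Filter.atBot (nhds (1, 0))) :
    Filter.Tendsto (fun t => x t * y t) Filter.atTop (nhds 0) ∧
      Filter.Tendsto (fun t => y t / t) Filter.atTop (nhds (-((n : ℝ) - 2))) ∧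
      Filter.Tendsto (fun t => Real.log (x t) / t ^ 2) Filter.atTop
        (nhds (-((n : ℝ) - 2) / 2)) := by
  have hn3 : (3:ℝ) ≤ (n:ℝ) := by exact_mod_cast hn
  have hm2 : (2:ℝ) ≤ m := by rw [hm]; linarith
  have hyneg : ∀ t, y t < 0 := by
    intro t
    have h1 := hx' t
    rw [heq1 t] at h1
    nlinarith [(hx t).1]
  -- the function h = y + (m-3) x has derivative -(m-1)(1-x²)
  set h : ℝ → ℝ := fun t => y t + (m - 3) * x t with hhdef
  have hdh : Differentiable ℝ h := hdy.add (hdx.const_mul _)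
  have hderivh : ∀ t, deriv h t = -((m - 1) * (1 - x t ^ 2)) := by
    intro t
    have e1 : deriv h t = deriv y t + (m - 3) * deriv x t := by
      rw [hhdef, deriv_fun_add (hdy t) ((hdx.const_mul (m-3)) t),
        deriv_const_mul _ (hdx t)]
    rw [e1, heq1, heq2]; ring
  have hhy : ∀ t, y t = h t - (m - 3) * x t := by intro t; rw [hhdef]; ring
  clear_value h
  -- x is non-increasing
  have hxle : ∀ t, 0 ≤ t → x t ≤ x 0 :=
    fun t ht => aux_le_start hdx (fun s _ => (hx' s).le) ht
  set c₀ : ℝ := 1 - x 0 ^ 2 with hc₀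
  have hc₀pos : 0 < c₀ := by nlinarith [(hx 0).1, (hx 0).2]
  clear_value c₀
  have hdh_le : ∀ s, 0 ≤ s → deriv h s ≤ -((m-1) * c₀) := by
    intro s hs
    rw [hderivh]
    have h1 := hxle s hs
    have h2 := (hx s).1
    have h3 : (0:ℝ) ≤ x 0 ^ 2 - x s ^ 2 := by nlinarith
    nlinarith [mul_nonneg (by linarith : (0:ℝ) ≤ m - 1) h3]
  have hhub := aux_upper hdh hdh_le
  -- y decays at least linearly
  have hyub : ∀ t, 0 ≤ t → y t ≤ (h 0 + |m - 3|) - (m-1)*c₀*t := by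
    intro t ht
    have h1 := hhub t ht
    have h3 : -((m-3) * x t) ≤ |m-3| := by
      have h4 : -((m-3) * x t) ≤ |(m-3) * x t| := neg_le_abs _
      rw [abs_mul] at h4
      have h5 : |x t| ≤ 1 := by
        rw [abs_of_pos (hx t).1]; exact (hx t).2.le
      nlinarith [abs_nonneg (m-3)]
    have h2 := hhy t
    nlinarith
  -- choose T₁ beyond which y ≤ -1
  set T₁ : ℝ := max 0 ((h 0 + |m - 3| + 1)/((m-1)*c₀)) with hT₁def
  have hT₁0 : 0 ≤ T₁ := le_max_left _ _
  have hy1 : ∀ t, T₁ ≤ t → y t ≤ -1 := by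
    intro t ht
    have h0t : 0 ≤ t := le_trans hT₁0 ht
    have h1 := hyub t h0t
    have hBpos : 0 < (m-1)*c₀ := by nlinarith
    have h2 : (h 0 + |m - 3| + 1)/((m-1)*c₀) ≤ t := le_trans (le_max_right _ _) ht
    rw [div_le_iff₀ hBpos] at h2
    nlinarith
  clear_value T₁
  -- p = log x
  set p : ℝ → ℝ := fun t => Real.log (x t) with hpdef
  have hdp : Differentiable ℝ p := by
    intro t
    exact ((hdx t).hasDerivAt.log (hx t).1.ne').differentiableAt
  have hderivp : ∀ t, deriv p t = y t := by
    intro t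
    have e1 : deriv p t = deriv x t / x t := by
      rw [hpdef]
      exact ((hdx t).hasDerivAt.log (hx t).1.ne').deriv
    rw [e1, heq1]
    rw [mul_comm, mul_div_assoc, div_self (hx t).1.ne', mul_one]
  have hxp : ∀ t, x t = Real.exp (p t) := by
    intro t; rw [hpdef, Real.exp_log (hx t).1]
  clear_value p
  -- x → 0
  have hpub : ∀ t, T₁ ≤ t → p t ≤ p T₁ + (-1) * (t - T₁) := by
    refine aux_upper hdp ?_
    intro s hs
    rw [hderivp]
    exact hy1 s hs
  have hxto0 : Filter.Tendsto x Filter.atTop (nhds 0) := by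
    apply squeeze_zero' (Filter.Eventually.of_forall fun t => (hx t).1.le)
      (g := fun t => Real.exp (p T₁ + T₁) * Real.exp (-t))
    · filter_upwards [Filter.eventually_ge_atTop T₁] with t ht
      rw [hxp t, ← Real.exp_add]
      exact Real.exp_le_exp.mpr (by linarith [hpub t ht])
    · simpa using Real.tendsto_exp_neg_atTop_nhds_zero.const_mul (Real.exp (p T₁ + T₁))
  -- deriv h → -(m-1), hence h/t → -(m-1), hence y/t → -(m-1)
  have hx2to0 : Filter.Tendsto (fun t => x t ^ 2) Filter.atTop (nhds 0) := by
    have h1 := hxto0.pow 2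
    rw [show ((0:ℝ))^2 = 0 by norm_num] at h1
    exact h1
  have hdh_tendsto : Filter.Tendsto (deriv h) Filter.atTop (nhds (-(m-1))) := by
    have h1 : Filter.Tendsto (fun t => -((m-1) * (1 - x t ^ 2))) Filter.atTop
        (nhds (-((m-1) * (1 - 0)))) :=
      ((tendsto_const_nhds.sub hx2to0).const_mul (m-1)).neg
    have h2 : -((m-1) * (1 - (0:ℝ))) = -(m-1) := by ring
    rw [h2] at h1
    exact h1.congr fun t => (hderivh t).symm
  have hslope := aux_slope hdh hdh_tendsto
  have hxdiv : Filter.Tendsto (fun t => (m-3) * x t / t) Filter.atTop (nhds 0) :=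
    (hxto0.const_mul (m-3)).div_atTop Filter.tendsto_id
  have hy_t : Filter.Tendsto (fun t => y t / t) Filter.atTop (nhds (-(m-1))) := by
    have h1 : Filter.Tendsto (fun t => h t / t - (m-3) * x t / t) Filter.atTop
        (nhds (-(m-1) - 0)) := hslope.sub hxdiv
    rw [sub_zero] at h1
    refine h1.congr fun t => ?_
    rw [hhy t]; ring
  have hconst : -(m-1) = -((n:ℝ) - 2) := by rw [hm]; ring
  have goal2 : Filter.Tendsto (fun t => y t / t) Filter.atTop (nhds (-((n:ℝ) - 2))) := by
    rwa [hconst] at hy_t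
  -- log x / t² → -(m-1)/2
  have hyt' : Filter.Tendsto (fun t => deriv p t / t) Filter.atTop (nhds (-(m-1))) :=
    hy_t.congr fun t => by rw [hderivp]
  have goal3 : Filter.Tendsto (fun t => Real.log (x t) / t ^ 2) Filter.atTop
      (nhds (-((n:ℝ) - 2) / 2)) := by
    have h1 := aux_slope_sq hdp hyt'
    rw [hconst] at h1
    refine h1.congr fun t => ?_
    rw [hxp t, Real.log_exp]
  -- x y → 0
  have hev1 : ∀ᶠ t in Filter.atTop, y t ≤ -(1/2) * t := by
    have h1 := Metric.tendsto_nhds.mp hy_t (1/2) (by norm_num)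
    filter_upwards [h1, Filter.eventually_ge_atTop 1] with t hdist ht1
    rw [Real.dist_eq] at hdist
    have h2 := (abs_lt.mp hdist).2
    have htpos : (0:ℝ) < t := by linarith
    have h3 : y t / t < -(1/2) := by linarith
    have h4 : y t = (y t / t) * t := by field_simp
    nlinarith
  have hev2 : ∀ᶠ t in Filter.atTop, |y t| ≤ m * t := by
    have h1 := Metric.tendsto_nhds.mp hy_t 1 (by norm_num)
    filter_upwards [h1, Filter.eventually_ge_atTop 1] with t hdist ht1
    rw [Real.dist_eq] at hdist
    have htpos : (0:ℝ) < t := by linarith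
    have h2 := (abs_lt.mp hdist).1
    have h4 : y t = (y t / t) * t := by field_simp
    rw [abs_of_neg (hyneg t)]
    nlinarith [mul_pos (by linarith : (0:ℝ) < y t / t + m) htpos]
  obtain ⟨T₃, hT₃⟩ := Filter.eventually_atTop.mp (hev1.and (Filter.eventually_ge_atTop 0))
  have hpquad : ∀ t, T₃ ≤ t → p t + (1/8) * t ^ 2 ≤ p T₃ + (1/8) * T₃ ^ 2 := by
    intro t ht
    have hkey := aux_le_start (F := fun s => p s + (1/8) * s ^ 2)
      (hdp.add (by fun_prop)) (a := T₃) ?_ ht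
    · exact hkey
    · intro s hs
      rw [aux_deriv_quad hdp, hderivp]
      have h1 := (hT₃ s hs).1
      have h2 := (hT₃ s hs).2
      nlinarith
  set K := p T₃ + (1/8) * T₃ ^ 2 with hK
  clear_value K
  have goal1 : Filter.Tendsto (fun t => x t * y t) Filter.atTop (nhds 0) := by
    have hbot : Filter.Tendsto (fun t : ℝ => t - t^2/8) Filter.atTop Filter.atBot := by
      apply Filter.tendsto_atBot_mono' Filter.atTop
        (f₁ := fun t : ℝ => -t) ?_ tendsto_neg_atTop_atBot
      filter_upwards [Filter.eventually_ge_atTop 16] with t ht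
      nlinarith
    have hg0 : Filter.Tendsto (fun t => m * Real.exp K * Real.exp (t - t^2/8))
        Filter.atTop (nhds 0) := by
      simpa using (Real.tendsto_exp_atBot.comp hbot).const_mul (m * Real.exp K)
    apply squeeze_zero_norm' ?_ hg0
    filter_upwards [hev2, Filter.eventually_ge_atTop T₃] with t hyt ht3
    have hxb : x t ≤ Real.exp (K - (1/8) * t ^ 2) := by
      rw [hxp t]
      exact Real.exp_le_exp.mpr (by linarith [hpquad t ht3])
    have htexp : t ≤ Real.exp t := by linarith [Real.add_one_le_exp t]
    rw [Real.norm_eq_abs, abs_mul, abs_of_pos (hx t).1]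
    calc x t * |y t| ≤ Real.exp (K - (1/8)*t^2) * (m * t) :=
          mul_le_mul hxb hyt (abs_nonneg _) (Real.exp_pos (K - (1/8)*t^2)).le
      _ ≤ Real.exp (K - (1/8)*t^2) * (m * Real.exp t) := by
          have h5 : m * t ≤ m * Real.exp t :=
            mul_le_mul_of_nonneg_left htexp (by linarith)
          exact mul_le_mul_of_nonneg_left h5 (Real.exp_pos (K - (1/8)*t^2)).le
      _ = m * Real.exp K * Real.exp (t - t^2/8) := by
          have e1 : Real.exp (K - (1/8)*t^2) = Real.exp K * Real.exp (-(1/8)*t^2) := by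
            rw [← Real.exp_add]; congr 1; ring
          have e2 : Real.exp (t - t^2/8) = Real.exp t * Real.exp (-(1/8)*t^2) := by
            rw [← Real.exp_add]; congr 1; ring
          rw [e1, e2]; ring
  exact ⟨goal1, goal2, goal3⟩
end

section
/- Let n ≥ 3 be an integer. There do not exist functions f, R : [0, ∞) → ℝ, with f twice differentiable and R differentiable, such that f′(0) > 0, R(0) > 0, R(r) ≥ 0 for all r ≥ 0, f″(r) = R(r)/(2(n−1)) for all r ≥ 0, and R′(r)·f′(r) ≥ R(r)²/(n−1) for all r ≥ 0. -/
open Set Filter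

/-- Radial reduction of the triviality of complete gradient steady Schouten solitons:
there is no pair `(f, R)` on `[0, ∞)` with `f′(0) > 0`, `R(0) > 0`, `R ≥ 0`,
`f″ = R/(2(n−1))` and `R′·f′ ≥ R²/(n−1)`. -/
theorem no_steady_schouten_radial_profile (n : ℕ) (hn : 3 ≤ n) :
    ¬ ∃ f R : ℝ → ℝ,
      (∀ r ≥ (0 : ℝ), DifferentiableAt ℝ f r) ∧
      (∀ r ≥ (0 : ℝ), DifferentiableAt ℝ (deriv f) r) ∧
      (∀ r ≥ (0 : ℝ), DifferentiableAt ℝ R r) ∧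
      0 < deriv f 0 ∧ 0 < R 0 ∧ (∀ r ≥ (0 : ℝ), 0 ≤ R r) ∧
      (∀ r ≥ (0 : ℝ), deriv (deriv f) r = R r / (2 * ((n : ℝ) - 1))) ∧
      (∀ r ≥ (0 : ℝ), (R r) ^ 2 / ((n : ℝ) - 1) ≤ deriv R r * deriv f r) := by
  rintro ⟨f, R, hf1, hf2, hR1, hf'0, hR0, hRnn, heq, hineq⟩
  set c : ℝ := (n : ℝ) - 1 with hcdef
  have hn3 : (3:ℝ) ≤ (n:ℝ) := by exact_mod_cast hn
  have hc : 0 < c := by simp only [hcdef]; linarith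
  set g := deriv f with hg
  -- g is monotone on [0,∞), hence positive
  have hgmono : MonotoneOn g (Ici (0:ℝ)) := by
    apply monotoneOn_of_deriv_nonneg (convex_Ici 0)
      (fun r hr => (hf2 r hr).continuousAt.continuousWithinAt)
    · intro r hr
      rw [interior_Ici] at hr
      exact (hf2 r hr.le).differentiableWithinAt
    · intro r hr
      rw [interior_Ici] at hr
      rw [heq r hr.le]
      have := hRnn r hr.le
      positivity
  have hgpos : ∀ r ≥ (0:ℝ), 0 < g r := fun r hr =>
    lt_of_lt_of_le hf'0 (hgmono self_mem_Ici hr hr)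
  -- F = g'/g^2 is monotone on [0,∞)
  set F : ℝ → ℝ := fun r => deriv g r / (g r) ^ 2 with hF
  -- differentiability facts for deriv g away from 0
  have hdgev : ∀ r > (0:ℝ), deriv g =ᶠ[nhds r] fun x => R x / (2 * c) := by
    intro r hr
    filter_upwards [Ioi_mem_nhds hr] with x hx
    exact heq x (le_of_lt hx)
  have hdgdiff : ∀ r > (0:ℝ), DifferentiableAt ℝ (deriv g) r := by
    intro r hr
    exact ((hR1 r hr.le).div_const _).congr_of_eventuallyEq (hdgev r hr)
  have hddg : ∀ r > (0:ℝ), deriv (deriv g) r = deriv R r / (2 * c) := by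
    intro r hr
    rw [(hdgev r hr).deriv_eq, deriv_div_const]
  have hderivF : ∀ r > (0:ℝ), 0 ≤ deriv F r := by
    intro r hr
    have hgr := hgpos r hr.le
    have hg2 : DifferentiableAt ℝ (fun x => (g x) ^ 2) r := (hf2 r hr.le).pow 2
    have hne : (g r) ^ 2 ≠ 0 := by positivity
    have hdF : deriv F r = (deriv (deriv g) r * (g r) ^ 2 -
        deriv g r * deriv (fun x => (g x) ^ 2) r) / ((g r) ^ 2) ^ 2 :=
      deriv_div (hdgdiff r hr) hg2 hne
    rw [hdF, hddg r hr, deriv_fun_pow (hf2 r hr.le) 2, heq r hr.le]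
    have hkey := hineq r hr.le
    have h4 : (0:ℝ) < ((g r) ^ 2) ^ 2 := by positivity
    apply div_nonneg _ h4.le
    have hRr := hRnn r hr.le
    rw [div_le_iff₀ hc] at hkey
    have hrw : deriv R r / (2 * c) * g r ^ 2 -
        R r / (2 * c) * ((2:ℕ) * g r ^ (2 - 1) * (R r / (2 * c))) =
        ((deriv R r * g r * c - R r ^ 2) * g r) / (2 * c ^ 2) := by
      push_cast
      field_simp
    rw [hrw]
    have hnum : 0 ≤ (deriv R r * g r * c - R r ^ 2) * g r :=
      mul_nonneg (by linarith) hgr.le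
    positivity
  have hFmono : MonotoneOn F (Ici (0:ℝ)) := by
    apply monotoneOn_of_deriv_nonneg (convex_Ici 0)
    · -- continuity of F on Ici 0
      apply ContinuousOn.div
      · exact ContinuousOn.congr (ContinuousOn.div_const
          (fun r hr => (hR1 r hr).continuousAt.continuousWithinAt) _)
          (fun r hr => heq r hr)
      · exact fun r hr => ((hf2 r hr).continuousAt.continuousWithinAt).pow 2
      · intro r hr
        have := hgpos r hr
        positivity
    · intro r hr
      rw [interior_Ici] at hr
      have hgr := hgpos r hr.le
      exact ((hdgdiff r hr).div ((hf2 r hr.le).pow 2)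
        (pow_ne_zero 2 hgr.ne')).differentiableWithinAt
    · intro r hr
      rw [interior_Ici] at hr
      exact hderivF r hr
  set a : ℝ := R 0 / (2 * c * (g 0) ^ 2) with ha
  have hg0 := hgpos 0 le_rfl
  have hapos : 0 < a := by positivity
  have hF0 : F 0 = a := by
    simp only [hF, ha, heq 0 le_rfl]
    field_simp
  have hFge : ∀ r ≥ (0:ℝ), a ≤ F r := by
    intro r hr
    rw [← hF0]
    exact hFmono self_mem_Ici hr hr
  -- G = -1/g - a*r is monotone
  set G : ℝ → ℝ := fun r => -(g r)⁻¹ - a * r with hG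
  have hGdiff : ∀ r ≥ (0:ℝ), DifferentiableAt ℝ G r := by
    intro r hr
    exact (((hf2 r hr).inv (hgpos r hr).ne').neg).sub
      ((differentiableAt_id.const_mul a))
  have hGderiv : ∀ r > (0:ℝ), deriv G r = F r - a := by
    intro r hr
    have h1 : DifferentiableAt ℝ (fun x => (g x)⁻¹) r :=
      (hf2 r hr.le).inv (hgpos r hr.le).ne'
    simp only [hG]
    have h2 : HasDerivAt (fun x : ℝ => a * x) a r := by
      simpa using (hasDerivAt_id r).const_mul a
    rw [deriv_fun_sub (f := fun x => -(g x)⁻¹) h1.neg h2.differentiableAt, h2.deriv, deriv.fun_neg,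
      deriv_fun_inv'' (hf2 r hr.le) (hgpos r hr.le).ne']
    simp only [hF]
    ring
  have hGmono : MonotoneOn G (Ici (0:ℝ)) := by
    apply monotoneOn_of_deriv_nonneg (convex_Ici 0)
      (fun r hr => (hGdiff r hr).continuousAt.continuousWithinAt)
    · intro r hr
      rw [interior_Ici] at hr
      exact (hGdiff r hr.le).differentiableWithinAt
    · intro r hr
      rw [interior_Ici] at hr
      rw [hGderiv r hr]
      linarith [hFge r hr.le]
  -- conclusion
  set r0 : ℝ := ((g 0)⁻¹ + 1) / a with hr0
  have hr0pos : 0 < r0 := by positivity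
  have := hGmono self_mem_Ici (le_of_lt hr0pos : (0:ℝ) ≤ r0) hr0pos.le
  simp only [hG] at this
  have har0 : a * r0 = (g 0)⁻¹ + 1 := by
    rw [hr0]; field_simp
  have hinv : 0 < (g r0)⁻¹ := inv_pos.mpr (hgpos r0 hr0pos.le)
  rw [mul_zero, sub_zero, har0] at this
  linarith
end

section
/- Let λ > 0. Suppose f, R : [0, ∞) → ℝ, with f twice differentiable and R differentiable, satisfy: f′(0) > 0, R(r) ≥ 0 for all r ≥ 0, f″(r) = R(r)/4 + λ for all r ≥ 0, and R′(r)·f′(r) ≥ R(r)²/2 − 2λ·R(r) for all r ≥ 0. Then R is bounded on [0, ∞). -/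
/-- Step 1 of the classification of complete 3-dimensional gradient shrinking Schouten
solitons: along the radial profile, with `f′(0) > 0`, `R ≥ 0`, `f″ = R/4 + λ` and
`R′·f′ ≥ R²/2 − 2λR`, the scalar curvature `R` is bounded on `[0, ∞)`. -/
theorem shrinking_schouten_scalar_bounded (lam : ℝ) (hlam : 0 < lam) (f R : ℝ → ℝ)
    (hf : ∀ r ≥ (0 : ℝ), DifferentiableAt ℝ f r)
    (hf' : ∀ r ≥ (0 : ℝ), DifferentiableAt ℝ (deriv f) r)
    (hR : ∀ r ≥ (0 : ℝ), DifferentiableAt ℝ R r)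
    (hf0 : 0 < deriv f 0) (hRnonneg : ∀ r ≥ (0 : ℝ), 0 ≤ R r)
    (hfR : ∀ r ≥ (0 : ℝ), deriv (deriv f) r = R r / 4 + lam)
    (hRf : ∀ r ≥ (0 : ℝ), (R r) ^ 2 / 2 - 2 * lam * R r ≤ deriv R r * deriv f r) :
    ∃ M : ℝ, ∀ r ≥ (0 : ℝ), |R r| ≤ M := by
  -- f' is positive on [0, ∞)
  have hf'pos : ∀ r ≥ (0 : ℝ), 0 < deriv f r := by
    have hmono : MonotoneOn (deriv f) (Set.Ici (0:ℝ)) := by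
      apply monotoneOn_of_deriv_nonneg (convex_Ici 0)
      · exact fun x hx => (hf' x hx).continuousAt.continuousWithinAt
      · intro x hx
        rw [interior_Ici] at hx
        exact (hf' x (le_of_lt hx)).differentiableWithinAt
      · intro x hx
        rw [interior_Ici] at hx
        rw [hfR x (le_of_lt hx)]
        have := hRnonneg x (le_of_lt hx)
        linarith
    intro r hr
    have := hmono Set.self_mem_Ici (Set.mem_Ici.mpr hr) hr
    linarith
  -- main claim: R ≤ 24 λ
  have hbound : ∀ r ≥ (0 : ℝ), R r ≤ 24 * lam := by
    by_contra hcon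
    push_neg at hcon
    obtain ⟨r₁, hr₁0, hr₁⟩ := hcon
    -- barrier: R ≥ 20 λ on [r₁, ∞)
    have hbar : ∀ r ≥ r₁, 20 * lam ≤ R r := by
      by_contra hbc
      push_neg at hbc
      obtain ⟨r₃, hr₃1, hr₃⟩ := hbc
      set A : Set ℝ := Set.Ici r₁ ∩ R ⁻¹' Set.Iic (20 * lam) with hA
      have hAne : A.Nonempty := ⟨r₃, hr₃1, le_of_lt hr₃⟩
      have hAbdd : BddBelow A := ⟨r₁, fun x hx => hx.1⟩
      have hAclosed : IsClosed A := by
        apply ContinuousOn.preimage_isClosed_of_isClosed _ isClosed_Ici isClosed_Iic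
        exact fun x hx => (hR x (le_trans hr₁0 hx)).continuousAt.continuousWithinAt
      have hmem := hAclosed.csInf_mem hAne hAbdd
      set r₂ : ℝ := sInf A with hr₂def
      have hr₂1 : r₁ ≤ r₂ := hmem.1
      have hr₂val : R r₂ ≤ 20 * lam := hmem.2
      have hr₂ne : r₁ < r₂ := by
        rcases lt_or_eq_of_le hr₂1 with h | h
        · exact h
        · exfalso; rw [← h] at hr₂val; linarith
      -- R > 20 λ on [r₁, r₂)
      have hgt : ∀ x, r₁ ≤ x → x < r₂ → 20 * lam < R x := by
        intro x hx1 hx2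
        by_contra hle
        push_neg at hle
        exact absurd (csInf_le hAbdd ⟨hx1, hle⟩) (not_le.mpr hx2)
      -- R is strictly monotone on [r₁, r₂]
      have hsm : StrictMonoOn R (Set.Icc r₁ r₂) := by
        apply strictMonoOn_of_deriv_pos (convex_Icc r₁ r₂)
        · exact fun x hx => (hR x (le_trans hr₁0 hx.1)).continuousAt.continuousWithinAt
        · intro x hx
          rw [interior_Icc] at hx
          have hx0 : (0:ℝ) ≤ x := le_trans hr₁0 (le_of_lt hx.1)
          have hRx : 20 * lam < R x := hgt x (le_of_lt hx.1) hx.2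
          have h1 := hRf x hx0
          have h2 := hf'pos x hx0
          nlinarith [sq_nonneg (R x)]
      have := hsm (Set.left_mem_Icc.mpr (le_of_lt hr₂ne))
        (Set.right_mem_Icc.mpr (le_of_lt hr₂ne)) hr₂ne
      linarith
    -- the auxiliary function G = f'/R + r/10 is antitone on [r₁, ∞), yet positive-ish
    set G : ℝ → ℝ := fun r => deriv f r / R r + r / 10 with hG
    have hRpos : ∀ r ≥ r₁, 0 < R r := fun r hr => lt_of_lt_of_le (by linarith) (hbar r hr)
    have hGdiff : ∀ x ≥ r₁, DifferentiableAt ℝ G x := by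
      intro x hx
      have hx0 : (0:ℝ) ≤ x := le_trans hr₁0 hx
      exact (((hf' x hx0).div (hR x hx0) (ne_of_gt (hRpos x hx))).add
        ((differentiable_id.differentiableAt (x := x)).div_const 10))
    have hGderiv : ∀ x ≥ r₁, deriv G x =
        ((R x / 4 + lam) * R x - deriv f x * deriv R x) / (R x) ^ 2 + 1 / 10 := by
      intro x hx
      have hx0 : (0:ℝ) ≤ x := le_trans hr₁0 hx
      have h1 : HasDerivAt (fun r => deriv f r / R r)
          ((deriv (deriv f) x * R x - deriv f x * deriv R x) / (R x) ^ 2) x :=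
        ((hf' x hx0).hasDerivAt).div ((hR x hx0).hasDerivAt) (ne_of_gt (hRpos x hx))
      have h2 : HasDerivAt (fun r : ℝ => r / 10) (1 / 10) x := by
        simpa using (hasDerivAt_id x).div_const 10
      have : deriv (fun r => deriv f r / R r + r / 10) x = _ := (h1.add h2).deriv
      rw [hG, this, hfR x hx0]
    have hGanti : AntitoneOn G (Set.Ici r₁) := by
      apply antitoneOn_of_deriv_nonpos (convex_Ici r₁)
      · exact fun x hx => (hGdiff x hx).continuousAt.continuousWithinAt
      · intro x hx
        rw [interior_Ici] at hx
        exact (hGdiff x (le_of_lt hx)).differentiableWithinAt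
      · intro x hx
        rw [interior_Ici] at hx
        have hx1 : r₁ ≤ x := le_of_lt hx
        have hx0 : (0:ℝ) ≤ x := le_trans hr₁0 hx1
        rw [hGderiv x hx1]
        have hs : 20 * lam ≤ R x := hbar x hx1
        have hsp : 0 < R x := hRpos x hx1
        have hp : (R x) ^ 2 / 2 - 2 * lam * R x ≤ deriv R x * deriv f x := hRf x hx0
        have hsq : 0 < (R x) ^ 2 := by positivity
        rw [div_add' _ _ _ (ne_of_gt hsq), div_nonpos_iff]
        right
        constructor
        · nlinarith
        · linarith
    -- evaluate at a far point to get a contradiction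
    set x : ℝ := r₁ + 10 * (deriv f r₁ / R r₁) + 10 with hx
    have hfr₁pos : 0 < deriv f r₁ := hf'pos r₁ hr₁0
    have hQ1pos : 0 < deriv f r₁ / R r₁ := div_pos hfr₁pos (hRpos r₁ le_rfl)
    have hxr₁ : r₁ ≤ x := by rw [hx]; linarith
    have hle : G x ≤ G r₁ := hGanti Set.self_mem_Ici (Set.mem_Ici.mpr hxr₁) hxr₁
    have hQxpos : 0 < deriv f x / R x :=
      div_pos (hf'pos x (le_trans hr₁0 hxr₁)) (hRpos x hxr₁)
    rw [hG] at hle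
    simp only [hx] at hle hQxpos
    linarith
  refine ⟨24 * lam, fun r hr => ?_⟩
  rw [abs_of_nonneg (hRnonneg r hr)]
  exact hbound r hr
end
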